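/- For the linear accommodation controller with negative feedback (K_a < 0, with sign chosen so feedback opposes contact force), and the stiffness contact model, if the closed-loop force sequence converges to a limit F, then F = -(1-γ)Δx_r/(γ K_a); in particular the steady-state contact force is finite and proportional to the reference velocity Δx_r. -/

import Mathlib

open Filter

theorem steady_state_force
    (K_s K_a γ Δxr x F : ℝ) (x_c f : ℕ → ℝ)
    (hγ : γ ∈ Set.Ioo (0:ℝ) 1)
    (hKa : K_a < 0)
    (hKs : 0 < K_s)
    (hstiff : ∀ k, f k = K_s * (x - x_c k))
    (hupdate : ∀ k ≥ 1, x_c k = x_c (k-1) + Δxr + ∑ i ∈ Finset.range k, γ^(k-i) * (K_a * f i))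
    (hconv : Tendsto f atTop (nhds F)) :
    F = -(1 - γ) * Δxr / (γ * K_a) := by
  obtain ⟨hγ0, hγ1⟩ := hγ
  set S : ℕ → ℝ := fun k => ∑ i ∈ Finset.range k, γ^(k-i) * (K_a * f i) with hSdef
  -- S in terms of f
  have hS : ∀ k : ℕ, S (k+1) = (f k - f (k+1))/K_s - Δxr := by
    intro k
    have h1 := hupdate (k+1) (by omega)
    have h2 := hstiff (k+1)
    have h3 := hstiff k
    simp only [Nat.add_sub_cancel] at h1
    rw [h1] at h2
    field_simp
    nlinarith [h2, h3]
  -- S converges to -Δxr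
  have hf1 : Tendsto (fun k => f (k+1)) atTop (nhds F) :=
    hconv.comp (tendsto_add_atTop_nat 1)
  have hStail : Tendsto (fun k => S (k+1)) atTop (nhds (-Δxr)) := by
    have : Tendsto (fun k => (f k - f (k+1))/K_s - Δxr) atTop (nhds ((F - F)/K_s - Δxr)) := by
      exact (((hconv.sub hf1).div_const K_s).sub tendsto_const_nhds)
    simp only [sub_self, zero_div, zero_sub] at this
    exact this.congr (fun k => (hS k).symm)
  have hSconv : Tendsto S atTop (nhds (-Δxr)) := by
    rwa [← tendsto_add_atTop_iff_nat 1]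
  -- recursion
  have hrec : ∀ k : ℕ, S (k+1) = γ * S k + γ * (K_a * f k) := by
    intro k
    simp only [hSdef, Finset.sum_range_succ, Nat.sub_self, pow_one, Finset.mul_sum, mul_assoc]
    congr 1
    · apply Finset.sum_congr rfl
      intro i hi
      rw [Finset.mem_range] at hi
      have : k + 1 - i = (k - i) + 1 := by omega
      rw [this, pow_succ']
      ring
    · simp
  -- take limits in recursion
  have hRHS : Tendsto (fun k => γ * S k + γ * (K_a * f k)) atTop
      (nhds (γ * (-Δxr) + γ * (K_a * F))) :=
    (hSconv.const_mul γ).add ((hconv.const_mul K_a).const_mul γ)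
  have heq : -Δxr = γ * (-Δxr) + γ * (K_a * F) :=
    tendsto_nhds_unique (hStail.congr (fun k => hrec k)) hRHS
  have hne : γ * K_a ≠ 0 := mul_ne_zero (ne_of_gt hγ0) (ne_of_lt hKa)
  rw [eq_div_iff hne]
  nlinarith [heq]
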